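/- Let a, b, c, d be real constants and suppose (x_n)_{n≥-1}, (y_n)_{n≥-1} solve the constant-coefficient system with x_n ≠ 0 and y_n ≠ 0 for all n. Then for every n ≥ 0, x_{2n-1} = x_{-1}^{1-n}·(x_0·y_{-1}/y_0)^n·∏_{s=0}^{n-1} [(c^{2s} + d·x_{-1}·y_0·∑_{l=0}^{2s-1} c^l) / (a^{2s+1} + b·x_0·y_{-1}·∑_{l=0}^{2s} a^l)], where x_{-1}^{1-n} denotes an integer power of the nonzero real x_{-1}. -/

import Mathlib

theorem stmt_9 (x y : ℤ → ℝ) (a b c d : ℝ)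
    (hx : ∀ n : ℤ, -1 ≤ n → x n ≠ 0) (hy : ∀ n : ℤ, -1 ≤ n → y n ≠ 0)
    (hda : ∀ n : ℕ, a + b * (x n * y ((n : ℤ) - 1)) ≠ 0)
    (hdc : ∀ n : ℕ, c + d * (x ((n : ℤ) - 1) * y n) ≠ 0)
    (hxe : ∀ n : ℕ, x ((n : ℤ) + 1) =
      x n * y ((n : ℤ) - 1) / (y n * (a + b * (x n * y ((n : ℤ) - 1)))))
    (hye : ∀ n : ℕ, y ((n : ℤ) + 1) =
      x ((n : ℤ) - 1) * y n / (x n * (c + d * (x ((n : ℤ) - 1) * y n)))) :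
    ∀ n : ℕ, x (2 * (n : ℤ) - 1) =
      x (-1) ^ (1 - (n : ℤ)) * (x 0 * y (-1) / y 0) ^ n *
        ∏ s ∈ Finset.range n,
          (c ^ (2 * s) + d * x (-1) * y 0 * ∑ l ∈ Finset.range (2 * s), c ^ l) /
          (a ^ (2 * s + 1) + b * x 0 * y (-1) * ∑ l ∈ Finset.range (2 * s + 1), a ^ l) := by
  have hxne : ∀ n : ℕ, x ((n : ℤ) - 1) ≠ 0 := fun n => hx _ (by omega)
  have hyne : ∀ n : ℕ, y ((n : ℤ) - 1) ≠ 0 := fun n => hy _ (by omega)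
  have hxn : ∀ n : ℕ, x (n : ℤ) ≠ 0 := fun n => hx _ (by omega)
  have hyn : ∀ n : ℕ, y (n : ℤ) ≠ 0 := fun n => hy _ (by omega)
  -- step relations without division
  have h1 : ∀ n : ℕ, x ((n : ℤ) + 1) * y n * (a + b * (x n * y ((n : ℤ) - 1)))
      = x n * y ((n : ℤ) - 1) := by
    intro n
    rw [hxe n]
    rw [div_mul_eq_mul_div, div_mul_eq_mul_div, div_eq_iff (mul_ne_zero (hyn n) (hda n))]
    ring
  have h2 : ∀ n : ℕ, x n * y ((n : ℤ) + 1) * (c + d * (x ((n : ℤ) - 1) * y n))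
      = x ((n : ℤ) - 1) * y n := by
    intro n
    rw [hye n]
    rw [mul_div_assoc', div_mul_eq_mul_div, div_eq_iff (mul_ne_zero (hxn n) (hdc n))]
    ring
  -- closed form for u_n = x n * y (n-1)
  have hD : ∀ n : ℕ, x (n : ℤ) * y ((n : ℤ) - 1) *
      (a ^ n + b * x 0 * y (-1) * ∑ l ∈ Finset.range n, a ^ l) = x 0 * y (-1) := by
    intro n
    induction n with
    | zero => norm_num
    | succ n ih =>
      have h := h1 n
      have hcast : ((n + 1 : ℕ) : ℤ) = (n : ℤ) + 1 := by push_cast; ring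
      rw [hcast, show ((n : ℤ) + 1) - 1 = (n : ℤ) from by ring,
        geom_sum_succ, pow_succ]
      linear_combination (a ^ n + b * x 0 * y (-1) * ∑ l ∈ Finset.range n, a ^ l) * h
        + (1 - b * (x ((n : ℤ) + 1) * y n)) * ih
  -- closed form for v_n = x (n-1) * y n
  have hE : ∀ n : ℕ, x ((n : ℤ) - 1) * y (n : ℤ) *
      (c ^ n + d * x (-1) * y 0 * ∑ l ∈ Finset.range n, c ^ l) = x (-1) * y 0 := by
    intro n
    induction n with
    | zero => norm_num
    | succ n ih =>
      have h := h2 n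
      have hcast : ((n + 1 : ℕ) : ℤ) = (n : ℤ) + 1 := by push_cast; ring
      rw [hcast, show ((n : ℤ) + 1) - 1 = (n : ℤ) from by ring,
        geom_sum_succ, pow_succ]
      linear_combination (c ^ n + d * x (-1) * y 0 * ∑ l ∈ Finset.range n, c ^ l) * h
        + (1 - d * (x (n : ℤ) * y ((n : ℤ) + 1))) * ih
  have hu0 : x 0 * y (-1) ≠ 0 := mul_ne_zero (hx 0 (by omega)) (hy (-1) (by omega))
  have hv0 : x (-1) * y 0 ≠ 0 := mul_ne_zero (hx (-1) (by omega)) (hy 0 (by omega))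
  intro n
  induction n with
  | zero => norm_num
  | succ n ih =>
    set D : ℝ := a ^ (2 * n + 1) + b * x 0 * y (-1) * ∑ l ∈ Finset.range (2 * n + 1), a ^ l with hDdef
    set E : ℝ := c ^ (2 * n) + d * x (-1) * y 0 * ∑ l ∈ Finset.range (2 * n), c ^ l with hEdef
    have hA := hD (2 * n + 1)
    have hB := hE (2 * n)
    rw [show ((2 * n + 1 : ℕ) : ℤ) = 2 * (n : ℤ) + 1 from by push_cast; ring,
      show (2 * (n : ℤ) + 1) - 1 = 2 * (n : ℤ) from by ring, ← hDdef] at hA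
    rw [show ((2 * n : ℕ) : ℤ) = 2 * (n : ℤ) from by push_cast; ring, ← hEdef] at hB
    have hDne : D ≠ 0 := by
      intro h
      rw [h, mul_zero] at hA
      exact hu0 hA.symm
    have hEne : E ≠ 0 := by
      intro h
      rw [h, mul_zero] at hB
      exact hv0 hB.symm
    have hxm1 : x (-1) ≠ 0 := hx (-1) (by omega)
    have hy0 : y 0 ≠ 0 := hy 0 (by omega)
    have main : x (2 * (n : ℤ) + 1)
        = x (2 * (n : ℤ) - 1) * ((x (-1))⁻¹ * (x 0 * y (-1) / y 0) * (E / D)) := by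
      field_simp
      linear_combination x (2 * (n : ℤ) - 1) * E * hA - x (2 * (n : ℤ) + 1) * D * hB
    have hz : x (-1) ^ (1 - ((n : ℤ) + 1)) = x (-1) ^ (1 - (n : ℤ)) * (x (-1))⁻¹ := by
      rw [show (1 : ℤ) - ((n : ℤ) + 1) = (1 - (n : ℤ)) - 1 from by ring,
        zpow_sub_one₀ hxm1]
    push_cast
    rw [show 2 * ((n : ℤ) + 1) - 1 = 2 * (n : ℤ) + 1 from by ring, main, ih,
      Finset.prod_range_succ, pow_succ, hz]
    ring
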